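/- For every 0 ≤ i ≤ n−1, the cyclic map τ acts on the fundamental weights by τ(Λ_i) = Λ_{(i+1) mod n} − ((n−1−2i)/(2n)) c; in particular τ(c) = c and τ^n = id. -/

import Mathlib

open Finset

namespace TauAux

lemma minsum (b n : ℕ) (h : b < n) :
    2 * (∑ m ∈ Finset.range n, min m b) + b * b + b = 2 * n * b := by
  induction n, h using Nat.le_induction with
  | base =>
    have h1 : ∑ m ∈ Finset.range (b+1), min m b = ∑ m ∈ Finset.range (b+1), m :=
      Finset.sum_congr rfl fun m hm => min_eq_left (by simp at hm; omega)
    have g := Finset.sum_range_id_mul_two (b+1)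
    rw [Nat.add_sub_cancel] at g
    rw [h1]
    zify at g ⊢
    linear_combination g
  | succ n hn ih =>
    rw [Finset.sum_range_succ, min_eq_right (by omega)]
    zify at ih ⊢
    linear_combination ih

noncomputable def coefc (n a b : ℕ) : ℂ := ((min a b : ℕ) : ℂ) - (a : ℂ) * b / n

lemma coefc_zero_left (n b : ℕ) : coefc n 0 b = 0 := by simp [coefc]
lemma coefc_zero_right (n a : ℕ) : coefc n a 0 = 0 := by simp [coefc]

lemma Sc (n b : ℕ) (hn : 0 < n) (hb : b < n) :
    ∑ m : Fin n, coefc n m.val b = (b : ℂ) * ((n : ℂ) - b) / 2 := by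
  have hn0 : (n : ℂ) ≠ 0 := Nat.cast_ne_zero.mpr hn.ne'
  have A : 2 * ((∑ m ∈ range n, min m b : ℕ) : ℂ) + (b:ℂ) * b + b = 2 * n * b := by
    exact_mod_cast congrArg (Nat.cast (R := ℂ)) (minsum b n hb)
  have G : ((∑ m ∈ range n, m : ℕ) : ℂ) * 2 = (n : ℂ) * ((n:ℂ) - 1) := by
    have := Finset.sum_range_id_mul_two n
    have h2 : ((∑ m ∈ range n, m : ℕ) : ℂ) * 2 = ((n * (n-1) : ℕ) : ℂ) := by
      exact_mod_cast congrArg (Nat.cast (R := ℂ)) this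
    rw [h2]; push_cast [Nat.cast_sub hn]; ring
  have hmin : ∑ m : Fin n, ((min m.val b : ℕ) : ℂ) = ((∑ m ∈ range n, min m b : ℕ) : ℂ) := by
    rw [Nat.cast_sum]
    exact Fin.sum_univ_eq_sum_range (fun m => ((min m b : ℕ) : ℂ)) n
  have hid : ∑ m : Fin n, ((m : ℕ) : ℂ) = ((∑ m ∈ range n, m : ℕ) : ℂ) := by
    rw [Nat.cast_sum]
    exact Fin.sum_univ_eq_sum_range (fun m => ((m : ℕ) : ℂ)) n
  unfold coefc
  rw [Finset.sum_sub_distrib, hmin]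
  have : ∑ m : Fin n, (m.val : ℂ) * b / n = ((∑ m ∈ range n, m : ℕ) : ℂ) * b / n := by
    rw [← hid, ← Finset.sum_div, ← Finset.sum_mul]
  rw [this]
  set M : ℂ := ((∑ m ∈ range n, min m b : ℕ) : ℂ) with hM
  set T : ℂ := ((∑ m ∈ range n, m : ℕ) : ℂ) with hT
  field_simp
  linear_combination (n:ℂ) * A - (b:ℂ) * G

lemma key1 (n a b bm bp : ℕ) (hn : 2 ≤ n) (ha : a < n) (hb : b < n)
    (hbm : (b = 0 ∧ bm + 1 = n) ∨ b = bm + 1)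
    (hbp : (b + 1 = n ∧ bp = 0) ∨ bp = b + 1) :
    2 * coefc n a b - coefc n a bm - coefc n a bp
    = (if a = b then 1 else 0) - (if b = 0 then 1 else 0) := by
  have hn0 : (n : ℂ) ≠ 0 := Nat.cast_ne_zero.mpr (by omega)
  rcases hbm with ⟨hb0, hbmn⟩ | hbm
  · subst hb0
    have hbp1 : bp = 1 := by omega
    subst hbp1
    have hbmc : (bm : ℂ) = (n : ℂ) - 1 := by
      have : ((bm + 1 : ℕ) : ℂ) = (n : ℂ) := by exact_mod_cast congrArg (Nat.cast (R := ℂ)) hbmn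
      push_cast at this; linear_combination this
    rw [coefc_zero_right, if_pos rfl]
    rcases Nat.eq_zero_or_pos a with ha0 | ha1
    · subst ha0
      rw [coefc_zero_left, coefc_zero_left, if_pos rfl]; ring
    · rw [if_neg (show a ≠ 0 by omega)]
      unfold coefc
      rw [show min a bm = a from by omega, show min a 1 = 1 from by omega]
      push_cast
      rw [hbmc]
      field_simp
      ring
  · rcases hbp with ⟨hbn, hbp0⟩ | hbp
    · subst hbp0 hbm
      have hbmc : (bm : ℂ) = (n : ℂ) - 2 := by
        have : ((bm + 1 + 1 : ℕ) : ℂ) = (n : ℂ) := by exact_mod_cast congrArg (Nat.cast (R := ℂ)) hbn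
        push_cast at this; linear_combination this
      rw [coefc_zero_right, if_neg (show (bm + 1 : ℕ) ≠ 0 by omega)]
      rcases Nat.lt_or_ge a (bm + 1) with hab | hab
      · rw [if_neg (show a ≠ bm + 1 by omega)]
        unfold coefc
        rw [show min a (bm+1) = a from by omega, show min a bm = a from by omega]
        push_cast
        rw [hbmc]
        field_simp
        ring
      · have haeq : a = bm + 1 := by omega
        subst haeq
        rw [if_pos rfl]
        unfold coefc
        rw [show min (bm+1) (bm+1) = bm+1 from by omega, show min (bm+1) bm = bm from by omega]
        push_cast
        rw [hbmc]
        field_simp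
        ring
    · subst hbp hbm
      rw [if_neg (show (bm + 1 : ℕ) ≠ 0 by omega)]
      rcases Nat.lt_or_ge a (bm + 1) with hab | hab
      · rw [if_neg (show a ≠ bm + 1 by omega)]
        unfold coefc
        rw [show min a (bm+1) = a from by omega, show min a bm = a from by omega,
            show min a (bm+1+1) = a from by omega]
        push_cast; field_simp; ring
      · rcases Nat.eq_or_lt_of_le hab with haeq | hgt
        · rw [if_pos haeq.symm]
          subst haeq
          unfold coefc
          rw [show min (bm+1) (bm+1) = bm+1 from by omega, show min (bm+1) bm = bm from by omega,
              show min (bm+1) (bm+1+1) = bm+1 from by omega]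
          push_cast; field_simp; ring
        · rw [if_neg (show a ≠ bm + 1 by omega)]
          unfold coefc
          rw [show min a (bm+1) = bm+1 from by omega, show min a bm = bm from by omega,
              show min a (bm+1+1) = bm+1+1 from by omega]
          push_cast; field_simp; ring

lemma key3 (n a b am bm : ℕ) (hn : 2 ≤ n) (ha : a < n) (hb : b < n)
    (hbm : (b = 0 ∧ bm + 1 = n) ∨ b = bm + 1)
    (ham : (a + 1 = n ∧ am = 0) ∨ am = a + 1) :
    (n:ℂ) * coefc n a bm - (bm:ℂ)*((n:ℂ)-bm)/2 + ((n:ℂ) - 1 - 2*a)/2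
    = (n:ℂ) * coefc n am b - (b:ℂ)*((n:ℂ)-b)/2 := by
  have hn0 : (n : ℂ) ≠ 0 := Nat.cast_ne_zero.mpr (by omega)
  rcases hbm with ⟨hb0, hbmn⟩ | hbm
  · subst hb0
    rw [coefc_zero_right]
    have hbmc : (bm : ℂ) = (n : ℂ) - 1 := by
      have : ((bm + 1 : ℕ) : ℂ) = (n : ℂ) := by exact_mod_cast congrArg (Nat.cast (R := ℂ)) hbmn
      push_cast at this; linear_combination this
    rcases ham with ⟨han, ham0⟩ | ham
    · have hac : (a : ℂ) = (n : ℂ) - 1 := by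
        have : ((a + 1 : ℕ) : ℂ) = (n : ℂ) := by exact_mod_cast congrArg (Nat.cast (R := ℂ)) han
        push_cast at this; linear_combination this
      unfold coefc
      rw [show min a bm = a from by omega]
      push_cast
      rw [hbmc, hac]
      field_simp
      ring
    · unfold coefc
      rw [show min a bm = a from by omega]
      push_cast
      rw [hbmc]
      field_simp
      ring
  · subst hbm
    rcases ham with ⟨han, ham0⟩ | ham
    · subst ham0
      rw [coefc_zero_left]
      have hac : (a : ℂ) = (n : ℂ) - 1 := by
        have : ((a + 1 : ℕ) : ℂ) = (n : ℂ) := by exact_mod_cast congrArg (Nat.cast (R := ℂ)) han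
        push_cast at this; linear_combination this
      unfold coefc
      rw [show min a bm = bm from by omega]
      push_cast
      rw [hac]
      field_simp
      ring
    · subst ham
      rcases Nat.lt_or_ge a (bm + 1) with hab | hab
      · unfold coefc
        rw [show min a bm = a from by omega, show min (a+1) (bm+1) = a+1 from by omega]
        push_cast
        field_simp
        ring
      · unfold coefc
        rw [show min a bm = bm from by omega, show min (a+1) (bm+1) = bm+1 from by omega]
        push_cast
        field_simp
        ring

lemma dualFamily_indep {N : ℕ} {H : Type*} [AddCommGroup H] [Module ℂ H]
    (B : H →ₗ[ℂ] H →ₗ[ℂ] ℂ) (u w : Fin N → H)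
    (hp : ∀ i j, B (w i) (u j) = if i = j then 1 else 0) :
    LinearIndependent ℂ u := by
  rw [Fintype.linearIndependent_iff]
  intro g hg i
  have h2 := congrArg (B (w i)) hg
  simpa [map_sum, hp, mul_ite] using h2

lemma dualFamily_zero {N : ℕ} [NeZero N] {H : Type*} [AddCommGroup H] [Module ℂ H]
    [FiniteDimensional ℂ H] (hdim : Module.finrank ℂ H = N)
    (B : H →ₗ[ℂ] H →ₗ[ℂ] ℂ) (u w : Fin N → H)
    (hp : ∀ i j, B (w i) (u j) = if i = j then 1 else 0)
    (x : H) (hx : ∀ i, B (w i) x = 0) : x = 0 := by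
  have li := dualFamily_indep B u w hp
  have card : Fintype.card (Fin N) = Module.finrank ℂ H := by simp [hdim]
  let bu : Module.Basis (Fin N) ℂ H := basisOfLinearIndependentOfCardEqFinrank li card
  have hbu : ∀ i, bu i = u i := fun i => by
    simp [bu, coe_basisOfLinearIndependentOfCardEqFinrank]
  have hrepr : ∑ i, bu.repr x i • u i = x := by
    simp_rw [← hbu]
    exact bu.sum_repr x
  have hz : ∀ i, bu.repr x i = 0 := by
    intro i
    have h2 := congrArg (B (w i)) hrepr
    rw [hx i, map_sum] at h2
    simpa [map_smul, hp, mul_ite] using h2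
  rw [← hrepr]
  simp [hz]

end TauAux

noncomputable section

/-- The Cartan matrix of affine type `A^{(1)}_{n-1}` (with the convention
`a₀₁ = a₁₀ = -2` when `n = 2`). -/
def cartanA1 (n : ℕ) [NeZero n] (i j : Fin n) : ℂ :=
  (if i = j then 2 else 0) + (if i + 1 = j then -1 else 0) + (if j + 1 = i then -1 else 0)

set_option maxHeartbeats 2000000 in
/-- The cyclic map `τ` acts on the fundamental weights by
`τ(Λ_i) = Λ_{(i+1) mod n} - ((n-1-2i)/(2n)) c`; in particular `τ(c) = c` and `τ^n = id`. -/
theorem tau_on_fundamental_weights (n : ℕ) [NeZero n] (hn : 2 ≤ n)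
    (H : Type*) [AddCommGroup H] [Module ℂ H]
    (B : H →ₗ[ℂ] H →ₗ[ℂ] ℂ) (hBsymm : ∀ x y : H, B x y = B y x)
    (h : Fin n → H) (d : H) (Λ : Fin n → H) (c ρ : H)
    (bas : Module.Basis (Fin (n + 1)) ℂ H)
    (hbash : ∀ i : Fin n, bas i.castSucc = h i)
    (hbasd : bas (Fin.last n) = d)
    (hhh : ∀ i j : Fin n, B (h i) (h j) = cartanA1 n i j)
    (hhd : ∀ i : Fin n, B (h i) d = if i = 0 then 1 else 0)
    (hdd : B d d = 0)
    (hΛh : ∀ i j : Fin n, B (Λ i) (h j) = if i = j then 1 else 0)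
    (hΛd : ∀ i : Fin n, B (Λ i) d = 0)
    (hch : ∀ j : Fin n, B c (h j) = 0)
    (hcd : B c d = 1)
    (hc : c = ∑ i : Fin n, h i)
    (hρ : ρ = ∑ i : Fin n, Λ i)
    (τ : H →ₗ[ℂ] H)
    (hτh : ∀ i : Fin n, τ (h i) = h (i + 1))
    (hτρ : τ ρ = ρ) :
    (∀ i : Fin n, τ (Λ i) =
      Λ (i + 1) - (((n : ℂ) - 1 - 2 * (i : ℕ)) / (2 * n)) • c) ∧
    τ c = c ∧ τ ^ n = LinearMap.id := by
  classical
  obtain ⟨m, rfl⟩ : ∃ m, n = m + 1 := ⟨n - 1, by omega⟩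
  have hn0 : ((m + 1 : ℕ) : ℂ) ≠ 0 := Nat.cast_ne_zero.mpr (by omega)
  haveI : FiniteDimensional ℂ H := Module.Finite.of_basis bas
  have frH : Module.finrank ℂ H = (m + 1) + 1 := by
    rw [Module.finrank_eq_card_basis bas]; simp
  -- index arithmetic facts
  have hjm : ∀ j : Fin (m+1), (j.val = 0 ∧ (j - 1 : Fin (m+1)).val + 1 = m + 1) ∨
      j.val = (j - 1 : Fin (m+1)).val + 1 := by
    intro j
    rw [Fin.coe_sub_one]
    by_cases hj : j = 0
    · left; simp [hj]
    · right
      rw [if_neg hj]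
      have hjv : j.val ≠ 0 := fun h0 => hj (Fin.ext (by rw [h0, Fin.val_zero]))
      omega
  have hjp : ∀ j : Fin (m+1), (j.val + 1 = m + 1 ∧ (j + 1 : Fin (m+1)).val = 0) ∨
      (j + 1 : Fin (m+1)).val = j.val + 1 := by
    intro j
    rw [Fin.val_add_one]
    by_cases hj : j = Fin.last m
    · left
      rw [if_pos hj]
      subst hj
      simp
    · right; rw [if_neg hj]
  -- τ fixes c
  have hτc : τ c = c := by
    rw [hc, map_sum]
    simp only [hτh]
    exact Fintype.sum_equiv (Equiv.addRight (1 : Fin (m+1))) _ _ (fun i => rfl)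
  -- equality criterion via the dual family
  have key_eq : ∀ x y : H, (∀ j : Fin (m+1), B x (h j) = B y (h j)) → B x d = B y d → x = y := by
    intro x y h1 h2
    have pair : ∀ i j : Fin (m+1+1),
        B ((Fin.snoc h d : Fin (m+1+1) → H) i) ((Fin.snoc Λ c : Fin (m+1+1) → H) j)
          = if i = j then 1 else 0 := by
      intro i j
      induction i using Fin.lastCases with
      | last =>
        induction j using Fin.lastCases with
        | last => simpa [hBsymm d c] using hcd
        | cast j =>
          have hx : B d (Λ j) = 0 := by rw [hBsymm]; exact hΛd j
          simp [hx, (Fin.castSucc_lt_last j).ne']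
      | cast i =>
        induction j using Fin.lastCases with
        | last =>
          have hx : B (h i) c = 0 := by rw [hBsymm]; exact hch i
          simp [hx, (Fin.castSucc_lt_last i).ne]
        | cast j =>
          have hx : B (h i) (Λ j) = if j = i then 1 else 0 := by rw [hBsymm]; exact hΛh j i
          simp only [Fin.snoc_castSucc, hx, Fin.castSucc_inj]
          by_cases hij : i = j
          · simp [hij]
          · simp [hij, Ne.symm hij]
    have hzero : x - y = 0 := by
      apply TauAux.dualFamily_zero frH B (Fin.snoc Λ c) (Fin.snoc h d) pair
      intro i
      induction i using Fin.lastCases with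
      | last =>
        simp only [Fin.snoc_last, map_sub, LinearMap.sub_apply]
        rw [hBsymm d x, hBsymm d y, h2]
        ring
      | cast i =>
        simp only [Fin.snoc_castSucc, map_sub, LinearMap.sub_apply]
        rw [hBsymm (h i) x, hBsymm (h i) y, h1 i]
        ring
    exact sub_eq_zero.mp hzero
  -- B c ρ = n
  have hΛc : ∀ i : Fin (m+1), B (Λ i) c = 1 := by
    intro i
    rw [hc, map_sum]
    simp [hΛh]
  have hcρ : B c ρ = ((m+1 : ℕ) : ℂ) := by
    rw [hρ, map_sum]
    have hx : ∀ i : Fin (m+1), B c (Λ i) = 1 := fun i => by rw [hBsymm]; exact hΛc i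
    simp [hx]
  -- the explicit formula for Λ i
  set σ : Fin (m+1) → H := fun i2 => ∑ k : Fin (m+1), TauAux.coefc (m+1) i2.val k.val • h k
    with hσ
  have cartan_sum : ∀ i j : Fin (m+1),
      (∑ k : Fin (m+1), TauAux.coefc (m+1) i.val k.val * cartanA1 (m+1) k j)
      = (if i = j then 1 else 0) - (if j = 0 then 1 else 0) := by
    intro i j
    have step : ∀ k : Fin (m+1), TauAux.coefc (m+1) i.val k.val * cartanA1 (m+1) k j
        = (if k = j then TauAux.coefc (m+1) i.val k.val * 2 else 0)
          + (if k = j - 1 then TauAux.coefc (m+1) i.val k.val * (-1) else 0)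
          + (if j + 1 = k then TauAux.coefc (m+1) i.val k.val * (-1) else 0) := by
      intro k
      unfold cartanA1
      simp only [show (k + 1 = j) ↔ (k = j - 1) from eq_sub_iff_add_eq.symm]
      split_ifs <;> ring
    rw [Finset.sum_congr rfl (fun k _ => step k), Finset.sum_add_distrib, Finset.sum_add_distrib,
      Fintype.sum_ite_eq' j (fun k => TauAux.coefc (m+1) i.val k.val * 2),
      Fintype.sum_ite_eq' (j - 1) (fun k => TauAux.coefc (m+1) i.val k.val * (-1)),
      Fintype.sum_ite_eq (j + 1) (fun k => TauAux.coefc (m+1) i.val k.val * (-1))]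
    have hk1 := TauAux.key1 (m+1) i.val j.val (j - 1 : Fin (m+1)).val (j + 1 : Fin (m+1)).val hn
      i.isLt j.isLt (hjm j) (hjp j)
    simp only [Fin.ext_iff, Fin.val_zero]
    linear_combination hk1
  have Λform : ∀ i : Fin (m+1), Λ i = Λ 0 + σ i := by
    intro i
    apply key_eq
    · intro j
      rw [map_add, LinearMap.add_apply, hΛh, hΛh, hσ]
      simp only [map_sum, LinearMap.sum_apply, map_smul, LinearMap.smul_apply, hhh,
        smul_eq_mul]
      rw [cartan_sum i j]
      rcases eq_or_ne j 0 with rfl | hj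
      · simp
      · rw [if_neg (Ne.symm hj), if_neg hj]
        ring
    · rw [map_add, LinearMap.add_apply, hΛd, hΛd, hσ]
      simp only [map_sum, LinearMap.sum_apply, map_smul, LinearMap.smul_apply, hhd,
        smul_eq_mul, mul_ite, mul_one, mul_zero]
      rw [Fintype.sum_ite_eq' (0 : Fin (m+1)) (fun k => TauAux.coefc (m+1) i.val k.val)]
      simp [TauAux.coefc_zero_right]
  have hρform : ρ = ((m+1:ℕ):ℂ) • Λ 0 + ∑ m2 : Fin (m+1), σ m2 := by
    rw [hρ, Finset.sum_congr rfl (fun m2 _ => Λform m2), Finset.sum_add_distrib,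
      Finset.sum_const]
    congr 1
    rw [Finset.card_univ, Fintype.card_fin, ← Nat.cast_smul_eq_nsmul ℂ]
  have hnΛ0 : ((m+1:ℕ):ℂ) • Λ 0 = ρ - ∑ m2 : Fin (m+1), σ m2 := by
    rw [hρform]; abel
  have hτσ : ∀ m2 : Fin (m+1), τ (σ m2)
      = ∑ j : Fin (m+1), TauAux.coefc (m+1) m2.val ((j - 1 : Fin (m+1))).val • h j := by
    intro m2
    simp only [hσ]
    rw [map_sum]
    simp only [map_smul, hτh]
    exact Fintype.sum_equiv (Equiv.addRight (1 : Fin (m+1))) _ _ (fun k => by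
      simp [add_sub_cancel_right])
  have swapsum : ∀ f : Fin (m+1) → Fin (m+1) → ℂ,
      (∑ m2 : Fin (m+1), ∑ j : Fin (m+1), f m2 j • h j)
        = ∑ j : Fin (m+1), (∑ m2 : Fin (m+1), f m2 j) • h j := by
    intro f
    rw [Finset.sum_comm]
    exact Finset.sum_congr rfl fun j _ => (Finset.sum_smul).symm
  have main1 : ∀ i : Fin (m+1), τ (Λ i) =
      Λ (i + 1) - ((((m+1:ℕ) : ℂ) - 1 - 2 * (i : ℕ)) / (2 * ((m+1:ℕ) : ℂ))) • c := by
    intro i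
    apply smul_right_injective H hn0
    show ((m+1:ℕ):ℂ) • τ (Λ i) = ((m+1:ℕ):ℂ) • (Λ (i + 1)
      - ((((m+1:ℕ) : ℂ) - 1 - 2 * (i : ℕ)) / (2 * ((m+1:ℕ) : ℂ))) • c)
    have lhs1 : ((m+1:ℕ):ℂ) • τ (Λ i)
        = ρ + ∑ j : Fin (m+1),
            (((m+1:ℕ):ℂ) * TauAux.coefc (m+1) i.val ((j - 1 : Fin (m+1))).val
            - ∑ m2 : Fin (m+1), TauAux.coefc (m+1) m2.val ((j - 1 : Fin (m+1))).val) • h j := by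
      rw [Λform i, map_add, smul_add, ← map_smul, hnΛ0, map_sub, hτρ, map_sum]
      rw [Finset.sum_congr rfl fun m2 _ => hτσ m2,
        swapsum (fun m2 j => TauAux.coefc (m+1) m2.val ((j - 1 : Fin (m+1))).val)]
      rw [hτσ i, Finset.smul_sum]
      simp_rw [smul_smul]
      simp_rw [sub_smul]
      rw [Finset.sum_sub_distrib]
      abel
    have rhs1 : ((m+1:ℕ):ℂ) • (Λ (i + 1)
          - ((((m+1:ℕ) : ℂ) - 1 - 2 * (i : ℕ)) / (2 * ((m+1:ℕ) : ℂ))) • c)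
        = ρ + ∑ j : Fin (m+1),
            (((m+1:ℕ):ℂ) * TauAux.coefc (m+1) (i+1 : Fin (m+1)).val j.val
            - ∑ m2 : Fin (m+1), TauAux.coefc (m+1) m2.val j.val
            - ((m+1:ℕ):ℂ) * ((((m+1:ℕ) : ℂ) - 1 - 2 * (i : ℕ)) / (2 * ((m+1:ℕ) : ℂ)))) • h j := by
      rw [smul_sub, Λform (i+1), smul_add, hnΛ0]
      simp only [hσ]
      rw [swapsum (fun m2 j => TauAux.coefc (m+1) m2.val j.val)]
      rw [Finset.smul_sum, smul_smul, hc, Finset.smul_sum]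
      simp_rw [smul_smul]
      simp_rw [sub_smul]
      rw [Finset.sum_sub_distrib, Finset.sum_sub_distrib]
      abel
    rw [lhs1, rhs1]
    congr 1
    refine Finset.sum_congr rfl fun j _ => ?_
    congr 1
    rw [TauAux.Sc (m+1) ((j - 1 : Fin (m+1))).val (by omega) (Fin.is_lt _),
        TauAux.Sc (m+1) j.val (by omega) j.isLt]
    have hk3 := TauAux.key3 (m+1) i.val j.val ((i+1 : Fin (m+1))).val
      ((j - 1 : Fin (m+1))).val hn i.isLt j.isLt (hjm j) (hjp i)
    have hγ : ((m+1:ℕ):ℂ) * ((((m+1:ℕ) : ℂ) - 1 - 2 * (i : ℕ)) / (2 * ((m+1:ℕ) : ℂ)))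
        = (((m+1:ℕ):ℂ) - 1 - 2*(i.val:ℂ))/2 := by
      rw [mul_div_assoc', mul_comm ((m+1:ℕ):ℂ) _]
      exact mul_div_mul_right _ _ hn0
    linear_combination hk3 + hγ
  refine ⟨main1, hτc, ?_⟩
  open Fin.NatCast in
  have hpow_h : ∀ (k : ℕ) (i : Fin (m+1)), (τ ^ k) (h i) = h (i + (k : Fin (m+1))) := by
    intro k
    induction k with
    | zero => intro i; simp
    | succ k ih =>
      intro i
      rw [pow_succ, Module.End.mul_apply, hτh, ih]
      congr 1
      push_cast
      abel
  have hpow_ρ : ∀ k : ℕ, (τ ^ k) ρ = ρ := by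
    intro k
    induction k with
    | zero => simp
    | succ k ih => rw [pow_succ, Module.End.mul_apply, hτρ, ih]
  set w2 : Fin (m+1+1) → H :=
    Fin.snoc (fun i => Λ i - (B (Λ i) ρ / ((m+1:ℕ):ℂ)) • c) ((((m+1:ℕ):ℂ))⁻¹ • c) with hw2
  set u2 : Fin (m+1+1) → H := Fin.snoc h ρ with hu2
  have pair2 : ∀ i j, B (w2 i) (u2 j) = if i = j then 1 else 0 := by
    intro i j
    induction i using Fin.lastCases with
    | last =>
      induction j using Fin.lastCases with
      | last =>
        simp only [hw2, hu2, Fin.snoc_last, map_smul, LinearMap.smul_apply, smul_eq_mul, hcρ]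
        rw [if_pos trivial, inv_mul_cancel₀ hn0]
      | cast j =>
        simp only [hw2, hu2, Fin.snoc_last, Fin.snoc_castSucc, map_smul,
          LinearMap.smul_apply, smul_eq_mul, hch]
        simp [(Fin.castSucc_lt_last j).ne']
    | cast i =>
      induction j using Fin.lastCases with
      | last =>
        simp only [hw2, hu2, Fin.snoc_last, Fin.snoc_castSucc, map_sub, map_smul,
          LinearMap.sub_apply, LinearMap.smul_apply, smul_eq_mul, hcρ]
        rw [if_neg (Fin.castSucc_lt_last i).ne, div_mul_cancel₀ _ hn0, sub_self]
      | cast j =>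
        simp only [hw2, hu2, Fin.snoc_castSucc, map_sub, map_smul, LinearMap.sub_apply,
          LinearMap.smul_apply, smul_eq_mul, hΛh, hch, Fin.castSucc_inj]
        ring
  have li2 := TauAux.dualFamily_indep B u2 w2 pair2
  let b2 : Module.Basis (Fin (m+1+1)) ℂ H := basisOfLinearIndependentOfCardEqFinrank li2
    (by simp [frH])
  apply b2.ext
  intro k
  have hb2 : b2 k = u2 k := by
    simp [b2, coe_basisOfLinearIndependentOfCardEqFinrank]
  rw [hb2]
  induction k using Fin.lastCases with
  | last => simp [hu2, hpow_ρ]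
  | cast j =>
    simp only [hu2, Fin.snoc_castSucc, LinearMap.id_apply]
    rw [hpow_h (m+1) j, Fin.natCast_self, add_zero]
end
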